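/- Let p be a prime, A := 𝔽_p[X,X⁻¹], H := { [[X^n, P],[0, X^{−n}]] : n ∈ ℤ, P ∈ A } ≤ SL₂(A), and S := { [[X,0],[0,X⁻¹]], [[X⁻¹,0],[0,X]], [[1,1],[0,1]], [[1,−1],[0,1]], [[1,X],[0,1]], [[1,−X],[0,1]] }, a symmetric generating set of H. Let L_S be the word length on H associated to S: L_S(h) := min{ k : h is a product of a list of k elements of S }. Then H does not have radial rapid decay with respect to L_S: there is no polynomial P with real coefficients such that ⦀f⦀ ≤ P(L_S(f))·‖f‖₂ for every radial finitely supported f : H → ℂ. -/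

import Mathlib

open LaurentPolynomial
open scoped MatrixGroups

namespace Stmt17

variable {G : Type*} [Group G]

/-- Convolution of a finitely supported function with an arbitrary function. -/
noncomputable def conv (f : G →₀ ℂ) (ξ : G → ℂ) : G → ℂ :=
  fun g => ∑ h ∈ f.support, f h * ξ (h⁻¹ * g)

/-- The operator norm of the convolution operator `ξ ↦ f * ξ` on `ℓ²(G)` is at most `C`. -/
noncomputable def ConvOpNormLE (f : G →₀ ℂ) (C : ℝ) : Prop :=
  ∀ ξ : lp (fun _ : G => ℂ) 2, ∃ hmem : Memℓp (conv f (ξ : ∀ _ : G, ℂ)) 2,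
    ‖(⟨conv f (ξ : ∀ _ : G, ℂ), hmem⟩ : lp (fun _ : G => ℂ) 2)‖ ≤ C * ‖ξ‖

/-- The ℓ²-norm of a finitely supported function. -/
noncomputable def l2norm (f : G →₀ ℂ) : ℝ :=
  Real.sqrt (∑ g ∈ f.support, ‖f g‖ ^ 2)

/-- `L(f) = max {L g : f g ≠ 0}`. -/
noncomputable def lenOf (L : G → ℝ) (f : G →₀ ℂ) : ℝ :=
  sSup (L '' {g | f g ≠ 0})

def Radial (L : G → ℝ) (f : G →₀ ℂ) : Prop :=
  ∀ g₁ g₂, L g₁ = L g₂ → f g₁ = f g₂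

/-- Radial rapid decay with respect to `L`. -/
def HasRRD (L : G → ℝ) : Prop :=
  ∃ Q : Polynomial ℝ, ∀ f : G →₀ ℂ, Radial L f →
    ConvOpNormLE f (Q.eval (lenOf L f) * l2norm f)

/-- The six-element symmetric generating set
`S = {[[X,0],[0,X⁻¹]], [[X⁻¹,0],[0,X]], [[1,±1],[0,1]], [[1,±X],[0,1]]}`. -/
def Sset (p : ℕ) : Set (SL(2, LaurentPolynomial (ZMod p))) :=
  {M | (M : Matrix (Fin 2) (Fin 2) (LaurentPolynomial (ZMod p))) ∈
    ({!![T 1, 0; 0, T (-1)], !![T (-1), 0; 0, T 1],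
       !![1, 1; 0, 1], !![1, -1; 0, 1],
       !![1, T 1; 0, 1], !![1, -(T 1); 0, 1]} :
      Set (Matrix (Fin 2) (Fin 2) (LaurentPolynomial (ZMod p))))}

/-- The subgroup `H = {[[Xⁿ, P],[0, X⁻ⁿ]]}` of `SL₂(𝔽_p[X,X⁻¹])`, as a set. -/
def Hset (p : ℕ) : Set (SL(2, LaurentPolynomial (ZMod p))) :=
  {M | ∃ (n : ℤ) (P : LaurentPolynomial (ZMod p)),
    (M : Matrix (Fin 2) (Fin 2) (LaurentPolynomial (ZMod p))) = !![T n, P; 0, T (-n)]}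

end Stmt17


namespace Aux17
open Stmt17 LaurentPolynomial
open scoped MatrixGroups ENNReal

/-! ### Abstract analytic lemmas -/

section AbstractGroup
variable {G : Type*} [Group G] [DecidableEq G]

noncomputable def indic (s : Finset G) : G →₀ ℂ :=
  ⟨s, fun g => if g ∈ s then 1 else 0, by intro a; constructor <;> intro h <;> simp_all⟩

theorem indic_apply (s : Finset G) (g : G) : indic s g = if g ∈ s then 1 else 0 := rfl

theorem indic_support (s : Finset G) : (indic s).support = s := rfl

theorem l2norm_indic (s : Finset G) : l2norm (indic s) = Real.sqrt s.card := by
  unfold l2norm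
  rw [indic_support]
  congr 1
  rw [Finset.card_eq_sum_ones s]
  push_cast
  refine Finset.sum_congr rfl fun g hg => ?_
  rw [indic_apply, if_pos hg]
  norm_num

theorem lenOf_indic (L : G → ℝ) (s : Finset G) (hne : s.Nonempty) (n : ℝ)
    (hval : ∀ g ∈ s, L g = n) : lenOf L (indic s) = n := by
  unfold lenOf
  have : {g | indic s g ≠ 0} = (s : Set G) := by
    ext g
    by_cases h : g ∈ s <;> simp [indic_apply, h]
  rw [this]
  have himg : L '' (s : Set G) = {n} := by
    apply Set.eq_singleton_iff_nonempty_unique_mem.2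
    constructor
    · exact ⟨L hne.choose, ⟨hne.choose, hne.choose_spec, rfl⟩⟩
    · rintro x ⟨g, hg, rfl⟩; exact hval g hg
  rw [himg, csSup_singleton]

theorem conv_lower (Sfin E F' : Finset G)
    (hc : ∀ h ∈ Sfin, ∀ w ∈ F', w * h ∈ E) (C : ℝ)
    (hC : ConvOpNormLE (indic Sfin) C) :
    (Sfin.card : ℝ) * Real.sqrt F'.card ≤ C * Real.sqrt E.card := by
  classical
  set Einv := E.image (·⁻¹) with hEinv
  set Finv := F'.image (·⁻¹) with hFinv
  have hEcard : Einv.card = E.card := Finset.card_image_of_injective _ inv_injective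
  have hFcard : Finv.card = F'.card := Finset.card_image_of_injective _ inv_injective
  set ν : G → ℂ := fun g => if g ∈ Einv then 1 else 0 with hν
  have h2 : (2 : ℝ≥0∞).toReal = 2 := by norm_num
  have hrp : ∀ x : ℝ, x ^ (2:ℝ) = x ^ 2 := fun x => by
    rw [show (2:ℝ) = ((2:ℕ):ℝ) by norm_num, Real.rpow_natCast]
  have hterm : ∀ g, ‖ν g‖ ^ (2 : ℝ≥0∞).toReal = if g ∈ Einv then 1 else 0 := by
    intro g
    by_cases hg : g ∈ Einv
    · simp [hν, hg, Real.one_rpow]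
    · simp [hν, hg, Real.zero_rpow]
  have hmemν : Memℓp ν 2 := by
    apply memℓp_gen
    apply summable_of_ne_finset_zero (s := Einv)
    intro g hg
    rw [hterm g, if_neg hg]
  set ξ : lp (fun _ : G => ℂ) 2 := ⟨ν, hmemν⟩ with hξ
  have hnormξ : ‖ξ‖ = Real.sqrt Einv.card := by
    rw [lp.norm_eq_tsum_rpow (by norm_num) ξ]
    have hcoe : (ξ : ∀ _ : G, ℂ) = ν := rfl
    rw [show (∑' g, ‖(ξ : ∀ _ : G, ℂ) g‖ ^ (2:ℝ≥0∞).toReal)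
        = ∑' g, (if g ∈ Einv then (1:ℝ) else 0) from tsum_congr fun g => by rw [hcoe, hterm]]
    rw [tsum_eq_sum (s := Einv) (fun g hg => if_neg hg)]
    rw [Finset.sum_ite_mem, Finset.inter_self, Finset.sum_const, nsmul_eq_mul, mul_one]
    rw [h2, Real.sqrt_eq_rpow]
  obtain ⟨hm, hb⟩ := hC ξ
  have hconv : ∀ g ∈ Finv, conv (indic Sfin) ν g = (Sfin.card : ℂ) := by
    intro g hg
    obtain ⟨w, hw, rfl⟩ := Finset.mem_image.1 hg
    unfold conv
    rw [indic_support]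
    have hterm2 : ∀ h ∈ Sfin, indic Sfin h * ν (h⁻¹ * (fun x => x⁻¹) w) = 1 := by
      intro h hh
      rw [indic_apply, if_pos hh, one_mul]
      show (if (h⁻¹ * w⁻¹) ∈ Einv then (1:ℂ) else 0) = 1
      rw [← mul_inv_rev]
      exact if_pos (Finset.mem_image.2 ⟨w * h, hc h hh w hw, rfl⟩)
    rw [Finset.sum_congr rfl hterm2, Finset.sum_const, nsmul_eq_mul, mul_one]
  have hsum : ∑ g ∈ Finv, ‖conv (indic Sfin) ν g‖ ^ (2:ℝ≥0∞).toReal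
      = (F'.card : ℝ) * (Sfin.card : ℝ)^2 := by
    rw [Finset.sum_congr rfl (fun g hg => by
      rw [hconv g hg, h2, Complex.norm_natCast, hrp])]
    rw [Finset.sum_const, nsmul_eq_mul, hFcard]
  set Nrm := ‖(⟨conv (indic Sfin) (ξ : ∀ _ : G, ℂ), hm⟩ : lp (fun _ : G => ℂ) 2)‖ with hNrm
  have hNrm0 : 0 ≤ Nrm := norm_nonneg _
  have hle' := lp.sum_rpow_le_norm_rpow (p := 2) (by norm_num)
    (⟨conv (indic Sfin) (ξ : ∀ _ : G, ℂ), hm⟩ : lp (fun _ : G => ℂ) 2) Finv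
  have hle : (F'.card : ℝ) * (Sfin.card : ℝ)^2 ≤ Nrm^2 := by
    rw [← hsum, ← hrp Nrm, ← h2]
    exact hle'
  have hsqrt : (Sfin.card : ℝ) * Real.sqrt F'.card ≤ Nrm := by
    have hs0 : (0:ℝ) ≤ (Sfin.card : ℝ) := Nat.cast_nonneg _
    nlinarith [Real.sq_sqrt (show (0:ℝ) ≤ (F'.card:ℝ) by positivity),
      Real.sqrt_nonneg (F'.card : ℝ),
      mul_nonneg hs0 (Real.sqrt_nonneg (F'.card : ℝ))]
  calc (Sfin.card : ℝ) * Real.sqrt F'.card ≤ Nrm := hsqrt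
  _ ≤ C * ‖ξ‖ := hb
  _ = C * Real.sqrt E.card := by rw [hnormξ, hEcard]

end AbstractGroup

/-! ### The group `H` in coordinates -/

variable {p : ℕ} [Fact p.Prime]

noncomputable def mk17 (p : ℕ) [Fact p.Prime] (x : ℤ × LaurentPolynomial (ZMod p)) :
    SL(2, LaurentPolynomial (ZMod p)) :=
  ⟨!![T x.1, x.2 * T (-x.1); 0, T (-x.1)], by
    rw [Matrix.det_fin_two_of, ← T_add, add_neg_cancel, T_zero]; ring⟩

theorem mk17_mul (x y : ℤ × LaurentPolynomial (ZMod p)) :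
    mk17 p x * mk17 p y = mk17 p (x.1 + y.1, x.2 + T (2*x.1) * y.2) := by
  obtain ⟨a, P⟩ := x; obtain ⟨b, Q⟩ := y
  have e1 : T a * T (-a) = (1 : LaurentPolynomial (ZMod p)) := by
    rw [← T_add, add_neg_cancel, T_zero]
  have e2 : (T (-(a+b)) : LaurentPolynomial (ZMod p)) = T (-a) * T (-b) := by
    rw [← T_add]; ring_nf
  have e3 : (T (2*a) : LaurentPolynomial (ZMod p)) = T a * T a := by
    rw [← T_add]; ring_nf
  have ha : T a * T b + P * T (-a) * 0 = (T (a+b) : LaurentPolynomial (ZMod p)) := by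
    rw [T_add]; ring
  have hb : T a * (Q * T (-b)) + P * T (-a) * T (-b)
      = (P + T (2*a) * Q) * (T (-(a+b)) : LaurentPolynomial (ZMod p)) := by
    rw [e2, e3]; linear_combination (-(T a * Q * T (-b))) * e1
  have hc : (0 : LaurentPolynomial (ZMod p)) * T b + T (-a) * 0 = 0 := by ring
  have hd : (0 : LaurentPolynomial (ZMod p)) * (Q * T (-b)) + T (-a) * T (-b) = T (-(a+b)) := by
    rw [e2]; ring
  apply Subtype.ext
  rw [Matrix.SpecialLinearGroup.coe_mul]
  show (!![T a, P * T (-a); 0, T (-a)] * !![T b, Q * T (-b); 0, T (-b)])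
      = !![T (a+b), (P + T (2*a) * Q) * T (-(a+b)); 0, T (-(a+b))]
  rw [Matrix.mul_fin_two, ha, hb, hc, hd]

theorem mk17_one : mk17 p (0, 0) = 1 := by
  apply Subtype.ext
  show !![T (0:ℤ), 0 * T (-(0:ℤ)); 0, T (-(0:ℤ))]
      = (1 : Matrix (Fin 2) (Fin 2) (LaurentPolynomial (ZMod p)))
  rw [neg_zero, T_zero, Matrix.one_fin_two]
  norm_num

theorem T_inj17 {a b : ℤ} (h : (T a : LaurentPolynomial (ZMod p)) = T b) : a = b := by
  have : (Finsupp.single a (1 : ZMod p) : ℤ →₀ ZMod p) = Finsupp.single b 1 := congrArg AddMonoidAlgebra.coeff h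
  exact Finsupp.single_left_injective one_ne_zero this

theorem Tunit {a : ℤ} {P Q : LaurentPolynomial (ZMod p)} (h : P * T (-a) = Q * T (-a)) :
    P = Q := by
  have h2 := congrArg (· * T a) h
  simp only [mul_assoc] at h2
  rwa [← T_add, neg_add_cancel, T_zero, mul_one, mul_one] at h2

theorem mk17_injective : Function.Injective (mk17 p) := by
  rintro ⟨a, P⟩ ⟨b, Q⟩ h
  have hm : !![T a, P * T (-a); 0, T (-a)]
      = !![T b, Q * T (-b); 0, (T (-b) : LaurentPolynomial (ZMod p))] := congrArg Subtype.val h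
  have h00 : (T a : LaurentPolynomial (ZMod p)) = T b := by
    have := congrFun (congrFun hm 0) 0
    simpa using this
  obtain rfl : a = b := T_inj17 h00
  have h01 : P * T (-a) = Q * T (-a) := by
    have := congrFun (congrFun hm 0) 1
    simpa using this
  exact Prod.ext rfl (Tunit h01)

theorem mk17_t : mk17 p (1, 0) ∈ Sset p := by
  have : (mk17 p (1, 0) : Matrix (Fin 2) (Fin 2) (LaurentPolynomial (ZMod p)))
      = !![T 1, 0; 0, T (-1)] := by
    show !![T 1, 0 * T (-1); 0, T (-1)] = _
    rw [zero_mul]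
  exact Or.inl this

theorem mk17_tinv : mk17 p (-1, 0) ∈ Sset p := by
  have : (mk17 p (-1, 0) : Matrix (Fin 2) (Fin 2) (LaurentPolynomial (ZMod p)))
      = !![T (-1), 0; 0, T 1] := by
    show !![T (-1), 0 * T (-(-1)); 0, T (-(-1))] = _
    rw [zero_mul, neg_neg]
  exact Or.inr (Or.inl this)

theorem mk17_u : mk17 p (0, 1) ∈ Sset p := by
  have : (mk17 p (0, 1) : Matrix (Fin 2) (Fin 2) (LaurentPolynomial (ZMod p)))
      = !![1, 1; 0, 1] := by
    show !![T 0, 1 * T (-0); 0, T (-0)] = _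
    rw [neg_zero, T_zero, one_mul]
  exact Or.inr (Or.inr (Or.inl this))

theorem mk17_sset_cases (M : SL(2, LaurentPolynomial (ZMod p))) (hM : M ∈ Sset p) :
    M = mk17 p (1, 0) ∨ M = mk17 p (-1, 0) ∨
      ∃ c k, ((c : ZMod p) = 1 ∨ c = -1) ∧ ((k : ℤ) = 0 ∨ k = 1) ∧
        M = mk17 p (0, LaurentPolynomial.C c * T k) := by
  rcases hM with h | h | h | h | h | h
  · exact Or.inl (Subtype.ext (by rw [h]; show _ = !![T 1, 0 * T (-1); 0, T (-1)]; rw [zero_mul]))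
  · refine Or.inr (Or.inl (Subtype.ext ?_))
    rw [h]; show _ = !![T (-1), 0 * T (-(-1)); 0, T (-(-1))]; rw [zero_mul, neg_neg]
  · refine Or.inr (Or.inr ⟨1, 0, Or.inl rfl, Or.inl rfl, Subtype.ext ?_⟩)
    rw [h]; show _ = !![T 0, LaurentPolynomial.C 1 * T 0 * T (-0); 0, T (-0)]
    rw [neg_zero, T_zero, map_one, one_mul, mul_one]
  · refine Or.inr (Or.inr ⟨-1, 0, Or.inr rfl, Or.inl rfl, Subtype.ext ?_⟩)
    rw [h]; show _ = !![T 0, LaurentPolynomial.C (-1) * T 0 * T (-0); 0, T (-0)]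
    rw [neg_zero, T_zero, map_neg, map_one, mul_one, mul_one]
  · refine Or.inr (Or.inr ⟨1, 1, Or.inl rfl, Or.inr rfl, Subtype.ext ?_⟩)
    rw [h]; show _ = !![T 0, LaurentPolynomial.C 1 * T 1 * T (-0); 0, T (-0)]
    rw [neg_zero, T_zero, map_one, one_mul, mul_one]
  · refine Or.inr (Or.inr ⟨-1, 1, Or.inr rfl, Or.inr rfl, Subtype.ext ?_⟩)
    rw [h]; show _ = !![T 0, LaurentPolynomial.C (-1) * T 1 * T (-0); 0, T (-0)]
    rw [neg_zero, T_zero, map_neg, map_one, mul_one, neg_one_mul]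

/-! ### Window polynomials -/

def toFs (φ : LaurentPolynomial (ZMod p)) : ℤ →₀ ZMod p := φ.coeff

def InW (m : ℤ) (φ : LaurentPolynomial (ZMod p)) : Prop :=
  (toFs φ).support ⊆ Finset.Icc 0 (2*m+1)

theorem InW_zero (m : ℤ) : InW m (0 : LaurentPolynomial (ZMod p)) := by
  simp [InW, toFs]

theorem InW_add_single {m k : ℤ} {φ : LaurentPolynomial (ZMod p)} (h : InW m φ)
    (hk : k ∈ Finset.Icc (0:ℤ) (2*m+1)) (c : ZMod p) :
    InW m (φ + LaurentPolynomial.C c * T k) := by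
  have hsing : (LaurentPolynomial.C c * T k : LaurentPolynomial (ZMod p))
      = AddMonoidAlgebra.single k c := (single_eq_C_mul_T c k).symm
  unfold InW toFs at *
  intro j hj
  classical
  have hsub := Finsupp.support_add (g₁ := φ.coeff) (g₂ := Finsupp.single k c)
  rw [hsing] at hj
  rcases Finset.mem_union.1 (hsub hj) with h1 | h1
  · exact h h1
  · have := Finsupp.support_single_subset h1
    simp only [Finset.mem_singleton] at this
    exact this ▸ hk

noncomputable def Wfin (p : ℕ) [Fact p.Prime] (m : ℤ) : Finset (LaurentPolynomial (ZMod p)) :=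
  ((Finset.Icc (0:ℤ) (2*m+1)).finsupp (fun _ => (Finset.univ : Finset (ZMod p)))).map
    AddMonoidAlgebra.coeffEquiv.symm.toEmbedding

theorem mem_Wfin {m : ℤ} {φ : LaurentPolynomial (ZMod p)} : φ ∈ Wfin p m ↔ InW m φ := by
  classical
  rw [Wfin, Finset.mem_map_equiv]
  constructor
  · intro h
    exact (Finset.mem_finsupp_iff.1 h).1
  · intro h
    exact Finset.mem_finsupp_iff.2 ⟨h, fun a _ => Finset.mem_univ _⟩

theorem Wfin_nonempty (m : ℤ) : (Wfin p m).Nonempty :=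
  ⟨0, mem_Wfin.2 (InW_zero m)⟩

/-! ### The subgroup level -/

section withH
variable (Hsub : Subgroup (SL(2, LaurentPolynomial (ZMod p))))
  (hH : (Hsub : Set (SL(2, LaurentPolynomial (ZMod p)))) = Stmt17.Hset p)

noncomputable def mkH (x : ℤ × LaurentPolynomial (ZMod p)) : Hsub :=
  ⟨mk17 p x, by
    rw [← SetLike.mem_coe, hH]
    exact ⟨x.1, x.2 * T (-x.1), rfl⟩⟩

theorem mkH_coe (x : ℤ × LaurentPolynomial (ZMod p)) :
    (mkH Hsub hH x : SL(2, LaurentPolynomial (ZMod p))) = mk17 p x := rfl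

theorem mkH_mul (x y : ℤ × LaurentPolynomial (ZMod p)) :
    mkH Hsub hH x * mkH Hsub hH y = mkH Hsub hH (x.1 + y.1, x.2 + T (2*x.1) * y.2) := by
  apply Subtype.ext
  show mk17 p x * mk17 p y = mk17 p _
  rw [mk17_mul]

theorem mkH_one : mkH Hsub hH (0, 0) = 1 := by
  apply Subtype.ext
  show mk17 p (0, 0) = ((1 : Hsub) : SL(2, LaurentPolynomial (ZMod p)))
  rw [mk17_one, OneMemClass.coe_one]

theorem mkH_inj : Function.Injective (mkH Hsub hH) :=
  fun a b h => mk17_injective (congrArg Subtype.val h)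

theorem sset_casesH (s : Hsub) (hs : (s : SL(2, LaurentPolynomial (ZMod p))) ∈ Sset p) :
    s = mkH Hsub hH (1, 0) ∨ s = mkH Hsub hH (-1, 0) ∨
      ∃ c k, ((c : ZMod p) = 1 ∨ c = -1) ∧ ((k : ℤ) = 0 ∨ k = 1) ∧
        s = mkH Hsub hH (0, LaurentPolynomial.C c * T k) := by
  rcases mk17_sset_cases (s : SL(2, LaurentPolynomial (ZMod p))) hs with h | h | ⟨c, k, hc, hk, h⟩
  · exact Or.inl (Subtype.ext h)
  · exact Or.inr (Or.inl (Subtype.ext h))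
  · exact Or.inr (Or.inr ⟨c, k, hc, hk, Subtype.ext h⟩)

/-! ### Følner sets -/

noncomputable def FF (lo hi m : ℤ) : Finset Hsub :=
  letI : DecidableEq Hsub := Classical.decEq _
  ((Finset.Icc lo hi) ×ˢ Wfin p m).image (fun x => mkH Hsub hH x)

theorem card_FF (lo hi m : ℤ) :
    (FF Hsub hH lo hi m).card = (Finset.Icc lo hi).card * (Wfin p m).card := by
  letI : DecidableEq Hsub := Classical.decEq _
  rw [FF]
  rw [Finset.card_image_of_injective _ (mkH_inj Hsub hH), Finset.card_product]

theorem mem_FF_intro {lo hi m a : ℤ} {φ : LaurentPolynomial (ZMod p)}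
    (ha : a ∈ Finset.Icc lo hi) (hφ : InW m φ) :
    mkH Hsub hH (a, φ) ∈ FF Hsub hH lo hi m := by
  letI : DecidableEq Hsub := Classical.decEq _
  exact Finset.mem_image.2 ⟨(a, φ), Finset.mem_product.2 ⟨ha, mem_Wfin.2 hφ⟩, rfl⟩

theorem FF_mul_gen {lo hi m : ℤ} (h0 : 0 ≤ lo) (hm : hi ≤ m) {g s : Hsub}
    (hg : g ∈ FF Hsub hH lo hi m)
    (hs : (s : SL(2, LaurentPolynomial (ZMod p))) ∈ Sset p) :
    g * s ∈ FF Hsub hH (lo - 1) (hi + 1) m := by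
  letI : DecidableEq Hsub := Classical.decEq _
  obtain ⟨⟨a, φ⟩, hx, rfl⟩ := Finset.mem_image.1 hg
  obtain ⟨ha, hφ⟩ := Finset.mem_product.1 hx
  rw [Finset.mem_Icc] at ha
  have hφ' : InW m φ := mem_Wfin.1 hφ
  rcases sset_casesH Hsub hH s hs with rfl | rfl | ⟨c, k, hc, hk, rfl⟩
  · rw [mkH_mul]
    simp only [mul_zero, add_zero]
    exact mem_FF_intro Hsub hH (Finset.mem_Icc.2 ⟨by omega, by omega⟩) hφ'
  · rw [mkH_mul]
    simp only [mul_zero, add_zero]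
    exact mem_FF_intro Hsub hH (Finset.mem_Icc.2 ⟨by omega, by omega⟩) hφ'
  · rw [mkH_mul]
    have hrw : T (2*a) * (LaurentPolynomial.C c * T k)
        = LaurentPolynomial.C c * T (2*a + k) := by
      rw [T_add]; ring
    have hkmem : 2*a + k ∈ Finset.Icc (0:ℤ) (2*m+1) := by
      rw [Finset.mem_Icc]
      rcases hk with rfl | rfl <;> constructor <;> omega
    simp only [add_zero, hrw]
    exact mem_FF_intro Hsub hH (Finset.mem_Icc.2 ⟨by omega, by omega⟩)
      (InW_add_single hφ' hkmem c)

theorem FF_mul_list {m : ℤ} : ∀ (l : List Hsub),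
    (∀ x ∈ l, (x : SL(2, LaurentPolynomial (ZMod p))) ∈ Sset p) →
    ∀ lo hi : ℤ, 0 ≤ lo - l.length → hi + l.length ≤ m →
    ∀ g ∈ FF Hsub hH lo hi m,
      g * l.prod ∈ FF Hsub hH (lo - l.length) (hi + l.length) m := by
  intro l
  induction l with
  | nil =>
    intro _ lo hi _ _ g hg
    simpa using hg
  | cons x r ih =>
    intro hmem lo hi hlo hhi g hg
    have hx : (x : SL(2, LaurentPolynomial (ZMod p))) ∈ Sset p := hmem x (by simp)
    have hr : ∀ y ∈ r, (y : SL(2, LaurentPolynomial (ZMod p))) ∈ Sset p :=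
      fun y hy => hmem y (by simp [hy])
    have hlen : ((x :: r).length : ℤ) = (r.length : ℤ) + 1 := by
      rw [List.length_cons]; push_cast; ring
    have h1 : g * x ∈ FF Hsub hH (lo - 1) (hi + 1) m := by
      apply FF_mul_gen Hsub hH _ _ hg hx
      · have : (0:ℤ) ≤ (r.length : ℤ) := by positivity
        omega
      · have : (0:ℤ) ≤ (r.length : ℤ) := by positivity
        omega
    have h2 := ih hr (lo - 1) (hi + 1)
      (by rw [hlen] at hlo; omega) (by rw [hlen] at hhi; omega) (g * x) h1
    rw [List.prod_cons, ← mul_assoc]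
    have e1 : lo - 1 - (r.length : ℤ) = lo - ((x :: r).length : ℤ) := by omega
    have e2 : hi + 1 + (r.length : ℤ) = hi + ((x :: r).length : ℤ) := by omega
    rw [e1, e2] at h2
    exact h2

/-! ### Words of small length with many distinct products -/

noncomputable def tl : Hsub := mkH Hsub hH (1, 0)
noncomputable def tlinv : Hsub := mkH Hsub hH (-1, 0)
noncomputable def ul : Hsub := mkH Hsub hH (0, 1)

noncomputable def word : List (ZMod p) → List Hsub
  | [] => []
  | c :: r => List.replicate c.val (ul Hsub hH) ++ tl Hsub hH :: (word r ++ [tlinv Hsub hH])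

noncomputable def qpoly (l : List (ZMod p)) : Polynomial (ZMod p) :=
  l.foldr (fun c q => Polynomial.C c + Polynomial.X^2 * q) 0

theorem qpoly_nil : qpoly ([] : List (ZMod p)) = 0 := rfl

theorem qpoly_cons (c : ZMod p) (r : List (ZMod p)) :
    qpoly (c :: r) = Polynomial.C c + Polynomial.X^2 * qpoly r := rfl

theorem word_nil : word Hsub hH ([] : List (ZMod p)) = [] := rfl

theorem word_cons (c : ZMod p) (r : List (ZMod p)) :
    word Hsub hH (c :: r)
      = List.replicate c.val (ul Hsub hH) ++ tl Hsub hH :: (word Hsub hH r ++ [tlinv Hsub hH]) :=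
  rfl

theorem word_mem : ∀ (cs : List (ZMod p)) (x : Hsub), x ∈ word Hsub hH cs →
    (x : SL(2, LaurentPolynomial (ZMod p))) ∈ Sset p := by
  intro cs
  induction cs with
  | nil => intro x hx; simp [word] at hx
  | cons c r ih =>
    intro x hx
    rw [word, List.mem_append, List.mem_cons] at hx
    rcases hx with hx | hx | hx
    · rw [List.eq_of_mem_replicate hx, ul, mkH_coe]; exact mk17_u
    · rw [hx, tl, mkH_coe]; exact mk17_t
    · rw [List.mem_append] at hx
      rcases hx with hx | hx
      · exact ih x hx
      · rw [List.mem_singleton.1 hx, tlinv, mkH_coe]; exact mk17_tinv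

theorem word_len : ∀ cs : List (ZMod p),
    (word Hsub hH cs).length ≤ (p + 1) * cs.length := by
  intro cs
  induction cs with
  | nil => simp [word_nil]
  | cons c r ih =>
    rw [word_cons]
    have hval : c.val < p := ZMod.val_lt c
    have hl : (List.replicate c.val (ul Hsub hH)
        ++ tl Hsub hH :: (word Hsub hH r ++ [tlinv Hsub hH])).length
        = c.val + (word Hsub hH r).length + 2 := by
      simp [List.length_append, List.length_replicate, List.length_cons]
      omega
    rw [hl, List.length_cons, Nat.mul_succ]
    have h1 : c.val + 2 ≤ p + 1 := by omega
    have h2 : (word Hsub hH r).length ≤ (p+1) * r.length := ih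
    omega

theorem rep_ul (k : ℕ) : (List.replicate k (ul Hsub hH)).prod
    = mkH Hsub hH (0, LaurentPolynomial.C (k : ZMod p)) := by
  induction k with
  | zero =>
    rw [List.replicate_zero, List.prod_nil, Nat.cast_zero, map_zero, ← mkH_one Hsub hH]
  | succ k ih =>
    rw [List.replicate_succ, List.prod_cons, ih, ul, mkH_mul]
    refine congrArg (mkH Hsub hH) (Prod.ext (by ring) ?_)
    show (1 : LaurentPolynomial (ZMod p)) + T (2*(0:ℤ)) * LaurentPolynomial.C (k : ZMod p) = _
    rw [mul_zero, T_zero, one_mul]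
    push_cast
    rw [map_add, map_one]
    ring

theorem word_prod : ∀ cs : List (ZMod p),
    (word Hsub hH cs).prod = mkH Hsub hH (0, Polynomial.toLaurent (qpoly cs)) := by
  intro cs
  induction cs with
  | nil =>
    rw [word_nil, List.prod_nil, qpoly_nil, map_zero, ← mkH_one Hsub hH]
  | cons c r ih =>
    rw [word_cons, List.prod_append, List.prod_cons, List.prod_append, List.prod_singleton]
    rw [rep_ul, ih]
    set Lr := Polynomial.toLaurent (qpoly r) with hLr
    have hval : ((c.val : ℕ) : ZMod p) = c := by rw [ZMod.natCast_val, ZMod.cast_id]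
    have s1 : mkH Hsub hH (0, Lr) * tlinv Hsub hH = mkH Hsub hH (-1, Lr) := by
      rw [tlinv, mkH_mul]
      exact congrArg (mkH Hsub hH) (Prod.ext (by ring) (by rw [mul_zero, add_zero]))
    have s2 : tl Hsub hH * mkH Hsub hH (-1, Lr) = mkH Hsub hH (0, T 2 * Lr) := by
      rw [tl, mkH_mul]
      refine congrArg (mkH Hsub hH) (Prod.ext (by ring) ?_)
      show (0 : LaurentPolynomial (ZMod p)) + T (2*(1:ℤ)) * Lr = _
      rw [zero_add, show (2*(1:ℤ)) = 2 by norm_num]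
    have s3 : mkH Hsub hH (0, LaurentPolynomial.C c) * mkH Hsub hH (0, T 2 * Lr)
        = mkH Hsub hH (0, LaurentPolynomial.C c + T 2 * Lr) := by
      rw [mkH_mul]
      refine congrArg (mkH Hsub hH) (Prod.ext (by ring) ?_)
      show LaurentPolynomial.C c + T (2*(0:ℤ)) * (T 2 * Lr) = _
      rw [mul_zero, T_zero, one_mul]
    have hq : (Polynomial.toLaurent (qpoly (c :: r)) : LaurentPolynomial (ZMod p))
        = LaurentPolynomial.C c + T 2 * Lr := by
      rw [qpoly_cons, map_add, map_mul, map_pow, Polynomial.toLaurent_X,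
        Polynomial.toLaurent_C, pow_two, ← T_add, hLr]
      norm_num
    rw [hval, s1, s2, s3, hq]

theorem qpoly_inj (hp : p.Prime) : ∀ cs ds : List (ZMod p), cs.length = ds.length →
    qpoly cs = qpoly ds → cs = ds := by
  intro cs
  induction cs with
  | nil =>
    intro ds hlen _
    exact (List.length_eq_zero_iff.1 hlen.symm).symm ▸ rfl
  | cons c r ih =>
    intro ds hlen heq
    match ds with
    | [] => exact absurd hlen (by simp)
    | d :: e =>
      rw [qpoly_cons, qpoly_cons] at heq
      have hc : c = d := by
        have := congrArg (fun q => Polynomial.coeff q 0) heq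
        simpa [Polynomial.coeff_add, Polynomial.coeff_C_zero, mul_comm,
          Polynomial.coeff_mul_X_pow'] using this
      subst hc
      have hq : qpoly r = qpoly e := by
        have h2 : Polynomial.X^2 * qpoly r = Polynomial.X^2 * qpoly e := by
          have := heq
          rwa [add_right_inj] at this
        exact mul_left_cancel₀ (pow_ne_zero 2 Polynomial.X_ne_zero) h2
      have hlen' : r.length = e.length := by simpa using hlen
      rw [ih e hlen' hq]

/-! ### Finiteness of balls -/

theorem sset_finite : (Sset p).Finite := by
  have h6 : ({!![T 1, 0; 0, T (-1)], !![T (-1), 0; 0, T 1],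
       !![1, 1; 0, 1], !![1, -1; 0, 1],
       !![1, T 1; 0, 1], !![1, -(T 1); 0, 1]} :
      Set (Matrix (Fin 2) (Fin 2) (LaurentPolynomial (ZMod p)))).Finite := by
    apply Set.Finite.insert; apply Set.Finite.insert; apply Set.Finite.insert
    apply Set.Finite.insert; apply Set.Finite.insert; exact Set.finite_singleton _
  exact Set.Finite.preimage (Subtype.val_injective.injOn) h6

theorem sgen_finite : {x : Hsub | (x : SL(2, LaurentPolynomial (ZMod p))) ∈ Sset p}.Finite :=
  Set.Finite.preimage (Subtype.val_injective.injOn) sset_finite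

theorem ball_finite : ∀ n : ℕ,
    {h : Hsub | ∃ l : List Hsub, l.length ≤ n ∧
      (∀ x ∈ l, (x : SL(2, LaurentPolynomial (ZMod p))) ∈ Sset p) ∧ l.prod = h}.Finite := by
  intro n
  induction n with
  | zero =>
    apply Set.Finite.subset (Set.finite_singleton (1 : Hsub))
    rintro h ⟨l, hl, _, rfl⟩
    rw [Nat.le_zero] at hl
    rw [List.length_eq_zero_iff.1 hl]
    simp
  | succ n ih =>
    apply Set.Finite.subset (Set.Finite.union ih
      (Set.Finite.biUnion (sgen_finite (p := p) Hsub) (fun s _ => ih.image (fun h => s * h))))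
    rintro h ⟨l, hl, hmem, rfl⟩
    match l with
    | [] => exact Or.inl ⟨[], by simp⟩
    | x :: r =>
      refine Or.inr (Set.mem_biUnion (hmem x (by simp)) ?_)
      refine ⟨r.prod, ⟨r, ?_, fun y hy => hmem y (by simp [hy]), rfl⟩, by rw [List.prod_cons]⟩
      simpa using hl

end withH
end Aux17

/-- **The lamplighter subgroup `H ≤ SL₂(𝔽_p[X,X⁻¹])` does not have radial rapid
decay with respect to the word length of `S`.** Here `Hsub` is the subgroup
`{[[Xⁿ,P],[0,X⁻ⁿ]]}`, `S` is the symmetric generating set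
`{[[X^{±1},0],[0,X^{∓1}]], [[1,±1],[0,1]], [[1,±X],[0,1]]}` and `LS` is the
associated word length: `LS h` is the least `k` such that `h` is a product of a
list of `k` elements of `S`. -/
theorem statement17 (p : ℕ) (hp : p.Prime) [Fact p.Prime]
    (Hsub : Subgroup (SL(2, LaurentPolynomial (ZMod p))))
    (hH : (Hsub : Set (SL(2, LaurentPolynomial (ZMod p)))) = Stmt17.Hset p)
    (LS : Hsub → ℕ)
    (hLS : ∀ h : Hsub, IsLeast
      {k : ℕ | ∃ l : List Hsub, l.length = k ∧
        (∀ x ∈ l, (x : SL(2, LaurentPolynomial (ZMod p))) ∈ Stmt17.Sset p) ∧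
        l.prod = h}
      (LS h)) :
    ¬ Stmt17.HasRRD (fun h : Hsub => (LS h : ℝ)) := by
  classical
  rintro ⟨Q, hQ⟩
  set L : Hsub → ℝ := fun h => (LS h : ℝ) with hL
  -- spheres are finite
  have hSphFin : ∀ n : ℕ, {h : Hsub | LS h = n}.Finite := by
    intro n
    apply Set.Finite.subset (Aux17.ball_finite Hsub n)
    intro h hh
    obtain ⟨l, hlen, hmem, hprod⟩ := (hLS h).1
    exact ⟨l, by rw [hlen, hh], hmem, hprod⟩
  set Sn : ℕ → Finset Hsub := fun n => (hSphFin n).toFinset with hSnDef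
  have hmemSn : ∀ (n : ℕ) (g : Hsub), g ∈ Sn n ↔ LS g = n := fun n g =>
    Set.Finite.mem_toFinset _
  -- Step 1 : each sphere has at most (Q.eval n)^2 elements
  have key1 : ∀ n : ℕ, ((Sn n).card : ℝ) ≤ (Q.eval (n:ℝ))^2 := by
    intro n
    by_cases hne : (Sn n).Nonempty
    · have hrad : Stmt17.Radial L (Aux17.indic (Sn n)) := by
        intro g₁ g₂ hg
        have hg' : LS g₁ = LS g₂ := Nat.cast_injective hg
        rw [Aux17.indic_apply, Aux17.indic_apply]
        by_cases h1 : g₁ ∈ Sn n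
        · have h2 : g₂ ∈ Sn n := (hmemSn n g₂).2 (by rw [← hg']; exact (hmemSn n g₁).1 h1)
          rw [if_pos h1, if_pos h2]
        · have h2 : g₂ ∉ Sn n := fun hx =>
            h1 ((hmemSn n g₁).2 (by rw [hg']; exact (hmemSn n g₂).1 hx))
          rw [if_neg h1, if_neg h2]
      have hC := hQ _ hrad
      rw [Aux17.lenOf_indic L (Sn n) hne (n:ℝ)
        (fun g hg => by
          have h := (hmemSn n g).1 hg
          show ((LS g : ℕ) : ℝ) = (n:ℝ)
          rw [h]),
        Aux17.l2norm_indic] at hC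
      set s : ℝ := ((Sn n).card : ℝ) with hs
      set q : ℝ := Q.eval (n:ℝ) with hq
      have hs1 : 1 ≤ s := by
        rw [hs]
        exact_mod_cast Finset.card_pos.2 hne
      -- the Følner estimate, for every m ≥ 2n
      have hstep : ∀ m : ℕ, 2*n ≤ m → s * ((m:ℝ) - 2*n + 1) ≤ q^2 * ((m:ℝ) + 1) := by
        intro m hm
        -- multiplication condition
        have hc : ∀ h ∈ Sn n, ∀ w ∈ Aux17.FF Hsub hH (n:ℤ) ((m:ℤ) - (n:ℤ)) (m:ℤ),
            w * h ∈ Aux17.FF Hsub hH 0 (m:ℤ) (m:ℤ) := by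
          intro h hh w hw
          obtain ⟨l, hlen, hmem', hprod⟩ := (hLS h).1
          have hLSh : LS h = n := (hmemSn n h).1 hh
          have hcast : (l.length : ℤ) = (n : ℤ) := by rw [hlen, hLSh]
          have h2 := Aux17.FF_mul_list Hsub hH l hmem' (n:ℤ) ((m:ℤ) - (n:ℤ))
            (by rw [hcast]; omega) (by rw [hcast]; omega) w hw
          rw [hcast, hprod] at h2
          have e1 : (n:ℤ) - (n:ℤ) = 0 := by ring
          have e2 : (m:ℤ) - (n:ℤ) + (n:ℤ) = (m:ℤ) := by ring
          rw [e1, e2] at h2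
          exact h2
        have hcl := Aux17.conv_lower (Sn n) (Aux17.FF Hsub hH 0 (m:ℤ) (m:ℤ))
          (Aux17.FF Hsub hH (n:ℤ) ((m:ℤ) - (n:ℤ)) (m:ℤ)) hc _ hC
        rw [Aux17.card_FF, Aux17.card_FF] at hcl
        set W : ℝ := ((Aux17.Wfin p (m:ℤ)).card : ℝ) with hW
        have hW1 : 1 ≤ W := by
          rw [hW]
          exact_mod_cast Finset.card_pos.2 (Aux17.Wfin_nonempty (m:ℤ))
        have hIcc1 : (((Finset.Icc (0:ℤ) (m:ℤ)).card : ℕ) : ℝ) = (m:ℝ) + 1 := by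
          rw [Int.card_Icc, show ((m:ℤ) + 1 - 0) = ((m + 1 : ℕ) : ℤ) by push_cast; ring,
            Int.toNat_natCast]
          push_cast; ring
        have hIcc2 : (((Finset.Icc (n:ℤ) ((m:ℤ) - (n:ℤ))).card : ℕ) : ℝ)
            = (m:ℝ) - 2*n + 1 := by
          rw [Int.card_Icc,
            show ((m:ℤ) - (n:ℤ) + 1 - (n:ℤ)) = ((m - 2*n + 1 : ℕ) : ℤ) by
              push_cast [Nat.cast_sub hm]; ring,
            Int.toNat_natCast]
          push_cast [Nat.cast_sub hm]; ring
        -- rewrite the cardinalities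
        have hcl2 : s * Real.sqrt (((m:ℝ) - 2*n + 1) * W)
            ≤ q * Real.sqrt s * Real.sqrt (((m:ℝ) + 1) * W) := by
          have hc1 : (((Finset.Icc (n:ℤ) ((m:ℤ) - (n:ℤ))).card * (Aux17.Wfin p (m:ℤ)).card : ℕ) : ℝ)
              = ((m:ℝ) - 2*n + 1) * W := by
            push_cast
            rw [show (((Finset.Icc (n:ℤ) ((m:ℤ) - (n:ℤ))).card : ℕ) : ℝ) = (m:ℝ) - 2*n + 1 from hIcc2]
          have hc2 : (((Finset.Icc (0:ℤ) (m:ℤ)).card * (Aux17.Wfin p (m:ℤ)).card : ℕ) : ℝ)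
              = ((m:ℝ) + 1) * W := by
            push_cast
            rw [show (((Finset.Icc (0:ℤ) (m:ℤ)).card : ℕ) : ℝ) = (m:ℝ) + 1 from hIcc1]
          rw [hc1, hc2] at hcl
          exact hcl
        -- square the inequality and cancel W and s
        have hmn : (0:ℝ) ≤ (m:ℝ) - 2*n + 1 := by
          have : ((2*n : ℕ) : ℝ) ≤ (m:ℝ) := by exact_mod_cast hm
          push_cast at this
          linarith
        have hsq : s^2 * (((m:ℝ) - 2*n + 1) * W) ≤ q^2 * s * (((m:ℝ) + 1) * W) := by
          have h0 : 0 ≤ s * Real.sqrt (((m:ℝ) - 2*n + 1) * W) := by positivity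
          have h2 := mul_self_le_mul_self h0 hcl2
          have e1 : s * Real.sqrt (((m:ℝ) - 2*n + 1) * W)
              * (s * Real.sqrt (((m:ℝ) - 2*n + 1) * W))
              = s^2 * (((m:ℝ) - 2*n + 1) * W) := by
            rw [show ∀ a b : ℝ, a * b * (a * b) = a^2 * (b*b) from fun a b => by ring,
              Real.mul_self_sqrt (by positivity)]
          have e2 : q * Real.sqrt s * Real.sqrt (((m:ℝ) + 1) * W)
              * (q * Real.sqrt s * Real.sqrt (((m:ℝ) + 1) * W))
              = q^2 * s * (((m:ℝ) + 1) * W) := by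
            rw [show ∀ a b c : ℝ, a * b * c * (a * b * c) = a^2 * (b*b) * (c*c) from
              fun a b c => by ring,
              Real.mul_self_sqrt (by positivity), Real.mul_self_sqrt (by positivity)]
          rw [e1, e2] at h2
          exact h2
        have hWpos : 0 < W := by linarith
        have hspos : 0 < s := by linarith
        have hcanW : s^2 * ((m:ℝ) - 2*n + 1) ≤ q^2 * s * ((m:ℝ) + 1) := by
          have := (mul_le_mul_iff_left₀ hWpos).1 (by
            calc s^2 * ((m:ℝ) - 2*n + 1) * W = s^2 * (((m:ℝ) - 2*n + 1) * W) := by ring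
            _ ≤ q^2 * s * (((m:ℝ) + 1) * W) := hsq
            _ = q^2 * s * ((m:ℝ) + 1) * W := by ring)
          exact this
        have := (mul_le_mul_iff_right₀ hspos).1 (by
          calc s * (s * ((m:ℝ) - 2*n + 1)) = s^2 * ((m:ℝ) - 2*n + 1) := by ring
          _ ≤ q^2 * s * ((m:ℝ) + 1) := hcanW
          _ = s * (q^2 * ((m:ℝ) + 1)) := by ring)
        linarith
      -- let m → ∞
      by_contra hgt
      push_neg at hgt
      have hd : 0 < s - q^2 := by linarith
      obtain ⟨m, hm⟩ := exists_nat_gt (max (2*(n:ℝ)) ((s*(2*n) + q^2)/(s - q^2)))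
      have hm1 : 2*n ≤ m := by
        have := (max_le_iff.1 hm.le).1
        exact_mod_cast (by push_cast; linarith : ((2*n : ℕ):ℝ) ≤ (m:ℝ))
      have hm2 : (s*(2*n) + q^2)/(s - q^2) < (m:ℝ) := lt_of_le_of_lt (le_max_right _ _) hm
      have hstep' := hstep m hm1
      have hmul := (div_lt_iff₀ hd).1 hm2
      nlinarith [hs1]
    · rw [Finset.not_nonempty_iff_eq_empty] at hne
      rw [hne]
      simp only [Finset.card_empty, Nat.cast_zero]
      positivity
  -- Step 2 : growth of balls
  have key2 : ∀ k : ℕ, ((p:ℝ))^(k+1)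
      ≤ ∑ j ∈ Finset.range ((p+1)*(k+1)+1), ((Sn j).card : ℝ) := by
    intro k
    set M := (p+1)*(k+1) with hM
    set Θ : (Fin (k+1) → ZMod p) → Hsub := fun ψ =>
      Aux17.mkH Hsub hH (0, Polynomial.toLaurent (Aux17.qpoly (List.ofFn ψ))) with hΘ
    have hinj : Function.Injective Θ := by
      intro ψ χ h
      have h1 := Aux17.mkH_inj Hsub hH h
      have h2 : Polynomial.toLaurent (Aux17.qpoly (List.ofFn ψ))
          = Polynomial.toLaurent (Aux17.qpoly (List.ofFn χ)) := congrArg Prod.snd h1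
      have h3 := Polynomial.toLaurent_injective h2
      have h4 := Aux17.qpoly_inj hp _ _ (by simp) h3
      exact List.ofFn_injective h4
    have hLSle : ∀ ψ, LS (Θ ψ) ≤ M := by
      intro ψ
      have hub := (hLS (Θ ψ)).2 ⟨Aux17.word Hsub hH (List.ofFn ψ), rfl,
        Aux17.word_mem Hsub hH (List.ofFn ψ), Aux17.word_prod Hsub hH (List.ofFn ψ)⟩
      calc LS (Θ ψ) ≤ (Aux17.word Hsub hH (List.ofFn ψ)).length := hub
      _ ≤ (p+1) * (List.ofFn ψ).length := Aux17.word_len Hsub hH _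
      _ = M := by rw [List.length_ofFn, hM]
    have hsub : Finset.univ.image Θ ⊆ (Finset.range (M+1)).biUnion Sn := by
      intro g hg
      obtain ⟨ψ, _, rfl⟩ := Finset.mem_image.1 hg
      exact Finset.mem_biUnion.2 ⟨LS (Θ ψ), Finset.mem_range.2 (Nat.lt_succ_of_le (hLSle ψ)),
        (hmemSn _ _).2 rfl⟩
    have hcard1 : (Finset.univ.image Θ).card = p^(k+1) := by
      rw [Finset.card_image_of_injective _ hinj, Finset.card_univ]
      rw [Fintype.card_fun, ZMod.card, Fintype.card_fin]
    have hchain : p^(k+1) ≤ ∑ j ∈ Finset.range (M+1), (Sn j).card := by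
      calc p^(k+1) = (Finset.univ.image Θ).card := hcard1.symm
      _ ≤ ((Finset.range (M+1)).biUnion Sn).card := Finset.card_le_card hsub
      _ ≤ ∑ j ∈ Finset.range (M+1), (Sn j).card := Finset.card_biUnion_le
    calc ((p:ℝ))^(k+1) = ((p^(k+1) : ℕ) : ℝ) := by push_cast; ring
    _ ≤ ((∑ j ∈ Finset.range (M+1), (Sn j).card : ℕ) : ℝ) := by exact_mod_cast hchain
    _ = ∑ j ∈ Finset.range (M+1), ((Sn j).card : ℝ) := by push_cast; ring
  -- Step 3 : polynomial bound on the sum of squares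
  set D := Q.natDegree with hD
  set B : ℝ := (∑ i ∈ Finset.range (D+1), |Q.coeff i|) + 1 with hBdef
  have hB1 : 1 ≤ B := by
    rw [hBdef]
    have : 0 ≤ ∑ i ∈ Finset.range (D+1), |Q.coeff i| :=
      Finset.sum_nonneg fun i _ => abs_nonneg _
    linarith
  have habs : ∀ (j M : ℕ), j ≤ M → |Q.eval (j:ℝ)| ≤ B * ((M:ℝ)+1)^D := by
    intro j M hjM
    rw [Polynomial.eval_eq_sum_range]
    refine (Finset.abs_sum_le_sum_abs _ _).trans ?_
    have hterm : ∀ i ∈ Finset.range (D+1), |Q.coeff i * (j:ℝ)^i|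
        ≤ |Q.coeff i| * ((M:ℝ)+1)^D := by
      intro i hi
      rw [abs_mul, abs_pow, Nat.abs_cast]
      refine mul_le_mul_of_nonneg_left ?_ (abs_nonneg _)
      calc ((j:ℝ))^i ≤ ((M:ℝ)+1)^i := by
            apply pow_le_pow_left₀ (by positivity)
            have : (j:ℝ) ≤ (M:ℝ) := by exact_mod_cast hjM
            linarith
      _ ≤ ((M:ℝ)+1)^D := by
            apply pow_le_pow_right₀ (by
              have : (0:ℝ) ≤ (M:ℝ) := Nat.cast_nonneg _
              linarith)
            exact Nat.lt_succ_iff.1 (Finset.mem_range.1 hi)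
    refine (Finset.sum_le_sum hterm).trans ?_
    rw [← Finset.sum_mul]
    apply mul_le_mul_of_nonneg_right _ (by positivity)
    rw [hBdef]; linarith
  have hsq : ∀ (j M : ℕ), j ≤ M → (Q.eval (j:ℝ))^2 ≤ (B * ((M:ℝ)+1)^D)^2 := by
    intro j M hjM
    rw [← sq_abs]
    exact pow_le_pow_left₀ (abs_nonneg _) (habs j M hjM) 2
  -- Step 4 : contradiction via exponential growth
  set B' : ℝ := B^2 * ((p:ℝ)+2)^(2*D+1) with hB'def
  have hB'pos : 0 < B' := by positivity
  have hfinal : ∀ k : ℕ, (2:ℝ)^(k+1) ≤ B' * ((k:ℝ)+1)^(2*D+1) := by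
    intro k
    set M := (p+1)*(k+1) with hM
    have h1 : ((p:ℝ))^(k+1) ≤ ∑ j ∈ Finset.range (M+1), ((Sn j).card : ℝ) := key2 k
    have h2 : ∑ j ∈ Finset.range (M+1), ((Sn j).card : ℝ)
        ≤ ∑ j ∈ Finset.range (M+1), (B * ((M:ℝ)+1)^D)^2 := by
      apply Finset.sum_le_sum
      intro j hj
      exact le_trans (key1 j) (hsq j M (Nat.lt_succ_iff.1 (Finset.mem_range.1 hj)))
    have h3 : ∑ j ∈ Finset.range (M+1), (B * ((M:ℝ)+1)^D)^2
        = ((M:ℝ)+1) * (B * ((M:ℝ)+1)^D)^2 := by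
      rw [Finset.sum_const, Finset.card_range, nsmul_eq_mul]
      push_cast; ring
    have hMb : ((M:ℝ)+1) ≤ ((p:ℝ)+2) * ((k:ℝ)+1) := by
      rw [hM]
      push_cast
      nlinarith [Nat.cast_nonneg (α := ℝ) k, Nat.cast_nonneg (α := ℝ) p]
    have hM1 : (1:ℝ) ≤ (M:ℝ)+1 := by
      have : (0:ℝ) ≤ (M:ℝ) := Nat.cast_nonneg _
      linarith
    have h4 : ((M:ℝ)+1) * (B * ((M:ℝ)+1)^D)^2 = B^2 * ((M:ℝ)+1)^(2*D+1) := by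
      rw [mul_pow, ← pow_mul]
      ring
    have h5 : ((M:ℝ)+1)^(2*D+1) ≤ (((p:ℝ)+2) * ((k:ℝ)+1))^(2*D+1) :=
      pow_le_pow_left₀ (by positivity) hMb _
    have h2p : (2:ℝ)^(k+1) ≤ ((p:ℝ))^(k+1) := by
      apply pow_le_pow_left₀ (by norm_num)
      exact_mod_cast hp.two_le
    calc (2:ℝ)^(k+1) ≤ ((p:ℝ))^(k+1) := h2p
    _ ≤ ((M:ℝ)+1) * (B * ((M:ℝ)+1)^D)^2 := by rw [← h3]; exact le_trans h1 h2
    _ = B^2 * ((M:ℝ)+1)^(2*D+1) := h4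
    _ ≤ B^2 * (((p:ℝ)+2) * ((k:ℝ)+1))^(2*D+1) := by
        apply mul_le_mul_of_nonneg_left h5 (by positivity)
    _ = B' * ((k:ℝ)+1)^(2*D+1) := by rw [hB'def, mul_pow]; ring
  -- exponential beats polynomial
  have ht := tendsto_pow_const_div_const_pow_of_one_lt (2*D+1) (show (1:ℝ) < 2 by norm_num)
  have hev := ht.eventually_lt_const (show (0:ℝ) < 1/B' by positivity)
  obtain ⟨n, hn2, hn1⟩ := (hev.and (Filter.eventually_ge_atTop 1)).exists
  obtain ⟨k, rfl⟩ : ∃ k, n = k + 1 := ⟨n - 1, by omega⟩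
  have hle := hfinal k
  have hpow : (0:ℝ) < 2^(k+1) := by positivity
  rw [div_lt_iff₀ hpow] at hn2
  have : B' * (((k:ℕ):ℝ)+1)^(2*D+1) < 2^(k+1) := by
    have := mul_lt_mul_of_pos_left hn2 hB'pos
    rw [← mul_assoc, mul_one_div, div_self (ne_of_gt hB'pos), one_mul] at this
    calc B' * (((k:ℕ):ℝ)+1)^(2*D+1) = B' * (((k+1 : ℕ):ℝ))^(2*D+1) := by push_cast; ring
    _ < 2^(k+1) := this
  linarith
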